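/- Define f_1, f_2, f_3, f_4 : ℝ^4 → ℝ by f_1(x) = e^{x_1} + e^{−x_2}, f_2(x) = e^{x_2} + e^{−x_3}, f_3(x) = e^{−x_3} + e^{x_4}, f_4(x) = e^{−x_4} + e^{x_1}. Then the gradients ∇f_1(p), ∇f_2(p), ∇f_3(p), ∇f_4(p) are linearly dependent if and only if p_2 = p_4; in that case ∇f_1 + e^{−2p_2}∇f_2 − e^{−2p_2}∇f_3 − ∇f_4 = 0 at p. -/

import Mathlib

noncomputable def paperF : Fin 4 → EuclideanSpace ℝ (Fin 4) → ℝ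
  | 0 => fun x => Real.exp (x 0) + Real.exp (-(x 1))
  | 1 => fun x => Real.exp (x 1) + Real.exp (-(x 2))
  | 2 => fun x => Real.exp (-(x 2)) + Real.exp (x 3)
  | 3 => fun x => Real.exp (-(x 3)) + Real.exp (x 0)

lemma hasFDerivAt_exp_proj (s : ℝ) (i : Fin 4) (p : EuclideanSpace ℝ (Fin 4)) :
    HasFDerivAt (fun x : EuclideanSpace ℝ (Fin 4) => Real.exp (s * x i))
      ((s * Real.exp (s * p i)) • (EuclideanSpace.proj i : EuclideanSpace ℝ (Fin 4) →L[ℝ] ℝ)) p := by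
  have hin : HasFDerivAt (fun x : EuclideanSpace ℝ (Fin 4) => s * x i)
      (s • (EuclideanSpace.proj i : EuclideanSpace ℝ (Fin 4) →L[ℝ] ℝ)) p :=
    ((EuclideanSpace.proj i : EuclideanSpace ℝ (Fin 4) →L[ℝ] ℝ).hasFDerivAt.const_smul s)
  have := (Real.hasDerivAt_exp (s * p i)).comp_hasFDerivAt p hin
  have e : ((s * Real.exp (s * p i)) • (EuclideanSpace.proj i : EuclideanSpace ℝ (Fin 4) →L[ℝ] ℝ))
      = Real.exp (s * p i) • s • (EuclideanSpace.proj i : EuclideanSpace ℝ (Fin 4) →L[ℝ] ℝ) := by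
    rw [smul_smul, mul_comm]
  rw [e]; exact this

lemma grad_pair (s t : ℝ) (i j : Fin 4) (p : EuclideanSpace ℝ (Fin 4)) :
    HasGradientAt (fun x : EuclideanSpace ℝ (Fin 4) => Real.exp (s * x i) + Real.exp (t * x j))
      (EuclideanSpace.single i (s * Real.exp (s * p i))
        + EuclideanSpace.single j (t * Real.exp (t * p j))) p := by
  rw [hasGradientAt_iff_hasFDerivAt]
  have h := (hasFDerivAt_exp_proj s i p).add (hasFDerivAt_exp_proj t j p)
  refine h.congr_fderiv ?_
  ext y
  simp [inner_add_left, EuclideanSpace.inner_single_left]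

lemma grad0 (p : EuclideanSpace ℝ (Fin 4)) :
    gradient (paperF 0) p = EuclideanSpace.single 0 (Real.exp (p 0))
      + EuclideanSpace.single 1 (-Real.exp (-(p 1))) := by
  have h := grad_pair 1 (-1) 0 1 p
  simp only [one_mul, neg_one_mul, neg_mul] at h
  exact h.gradient

lemma grad1 (p : EuclideanSpace ℝ (Fin 4)) :
    gradient (paperF 1) p = EuclideanSpace.single 1 (Real.exp (p 1))
      + EuclideanSpace.single 2 (-Real.exp (-(p 2))) := by
  have h := grad_pair 1 (-1) 1 2 p
  simp only [one_mul, neg_one_mul, neg_mul] at h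
  exact h.gradient

lemma grad2 (p : EuclideanSpace ℝ (Fin 4)) :
    gradient (paperF 2) p = EuclideanSpace.single 2 (-Real.exp (-(p 2)))
      + EuclideanSpace.single 3 (Real.exp (p 3)) := by
  have h := grad_pair (-1) 1 2 3 p
  simp only [one_mul, neg_one_mul, neg_mul] at h
  exact h.gradient

lemma grad3 (p : EuclideanSpace ℝ (Fin 4)) :
    gradient (paperF 3) p = EuclideanSpace.single 3 (-Real.exp (-(p 3)))
      + EuclideanSpace.single 0 (Real.exp (p 0)) := by
  have h := grad_pair (-1) 1 3 0 p
  simp only [one_mul, neg_one_mul, neg_mul] at h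
  exact h.gradient

theorem gradients_dependent_iff_eq
    (p : EuclideanSpace ℝ (Fin 4)) :
    (¬ LinearIndependent ℝ (fun i => gradient (paperF i) p) ↔ p 1 = p 3) ∧
    (p 1 = p 3 →
      gradient (paperF 0) p + Real.exp (-(2 * p 1)) • gradient (paperF 1) p
        - Real.exp (-(2 * p 1)) • gradient (paperF 2) p - gradient (paperF 3) p = 0) := by
  have part2 : p 1 = p 3 →
      gradient (paperF 0) p + Real.exp (-(2 * p 1)) • gradient (paperF 1) p
        - Real.exp (-(2 * p 1)) • gradient (paperF 2) p - gradient (paperF 3) p = 0 := by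
    intro h
    rw [grad0, grad1, grad2, grad3]
    ext j
    fin_cases j <;>
      simp [EuclideanSpace.single_apply, ← Real.exp_add, ← h] <;> ring_nf
  refine ⟨⟨?_, ?_⟩, part2⟩
  · -- ¬ LI → p 1 = p 3
    intro hnli
    by_contra h
    apply hnli
    rw [Fintype.linearIndependent_iff]
    intro c hc
    rw [Fin.sum_univ_four] at hc
    simp only [grad0, grad1, grad2, grad3] at hc
    have ha := Real.exp_pos (p 0)
    have hd := Real.exp_pos (-(p 2))
    have e0 := congrArg (fun v : EuclideanSpace ℝ (Fin 4) => v 0) hc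
    have e1 := congrArg (fun v : EuclideanSpace ℝ (Fin 4) => v 1) hc
    have e2 := congrArg (fun v : EuclideanSpace ℝ (Fin 4) => v 2) hc
    have e3 := congrArg (fun v : EuclideanSpace ℝ (Fin 4) => v 3) hc
    simp [EuclideanSpace.single_apply] at e0 e1 e2 e3
    have hkey : Real.exp (-p 1) * Real.exp (p 3) ≠ Real.exp (p 1) * Real.exp (-p 3) := by
      rw [← Real.exp_add, ← Real.exp_add]
      intro hh
      exact h (by have := Real.exp_injective hh; linarith)
    have h30 : c 3 = -c 0 := by
      rcases mul_eq_zero.mp (show (c 0 + c 3) * Real.exp (p 0) = 0 by linear_combination e0) with h' | h'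
      · linarith
      · exact absurd h' (Real.exp_ne_zero _)
    have h21 : c 2 = -c 1 := by
      rcases mul_eq_zero.mp (show (c 1 + c 2) * Real.exp (-p 2) = 0 by linear_combination -e2) with h' | h'
      · linarith
      · exact absurd h' (Real.exp_ne_zero _)
    have h1' : c 1 * Real.exp (p 1) = c 0 * Real.exp (-p 1) := by linear_combination e1
    have h3' : c 1 * Real.exp (p 3) = c 0 * Real.exp (-p 3) := by
      rw [h30, h21] at e3; linarith
    have hc0 : c 0 = 0 := by
      rcases mul_eq_zero.mp (show c 0 * (Real.exp (-p 1) * Real.exp (p 3)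
          - Real.exp (p 1) * Real.exp (-p 3)) = 0 by
        linear_combination Real.exp (p 1) * h3' - Real.exp (p 3) * h1') with h' | h'
      · exact h'
      · exact absurd (sub_eq_zero.mp h') hkey
    have hc1 : c 1 = 0 := by
      have := h1'
      rw [hc0] at this
      simpa [Real.exp_ne_zero] using mul_eq_zero.mp (by linarith : c 1 * Real.exp (p 1) = 0)
    have hc2 : c 2 = 0 := by rw [h21, hc1, neg_zero]
    have hc3 : c 3 = 0 := by rw [h30, hc0, neg_zero]
    intro i; fin_cases i <;> assumption
  · -- p 1 = p 3 → ¬ LI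
    intro h hli
    have h2 := part2 h
    have := (Fintype.linearIndependent_iff.mp hli)
      ![1, Real.exp (-(2 * p 1)), -Real.exp (-(2 * p 1)), -1] ?_ 0
    · simp at this
    · rw [Fin.sum_univ_four]
      simp only [Matrix.cons_val_zero, Matrix.cons_val_one, Matrix.head_cons,
        Matrix.cons_val_two, Matrix.tail_cons, Matrix.cons_val_three]
      rw [← h2]
      module
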